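/- arXiv:2503.10005 — 2 statements merged into one kernel-verified Lean document; each statement's English description precedes it below -/
import Mathlib

section
/- Let a_t, b_t ≥ 0 for all t with b_t following the GD norm recursion a_{t+1} = a_t + η²‖p_t‖² and the GDM recursion b_{t+1} = b_t + η²‖p_t‖² + 2η²∑_{k=0}^{t-1} β^{t-k}‖p_k‖², a_0 = b_0 = ‖θ_0‖², with β ∈ (0,1) and 0 < ∑_{t≥0}‖p_t‖² < ∞. Then (b_t - ‖θ_0‖²)/(a_t - ‖θ_0‖²) → 1 + 2β/(1-β) as t → ∞. -/
theorem stmt7 {d : ℕ} (η β : ℝ) (hη : 0 < η) (hβ : β ∈ Set.Ioo (0:ℝ) 1)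
    (θ₀ : EuclideanSpace ℝ (Fin d)) (p : ℕ → EuclideanSpace ℝ (Fin d))
    (a b : ℕ → ℝ)
    (ha0 : a 0 = ‖θ₀‖^2) (hb0 : b 0 = ‖θ₀‖^2)
    (hannonneg : ∀ t, 0 ≤ a t) (hbnonneg : ∀ t, 0 ≤ b t)
    (ha : ∀ t, a (t+1) = a t + η^2 * ‖p t‖^2)
    (hb : ∀ t, b (t+1) = b t + η^2 * ‖p t‖^2
        + 2*η^2 * ∑ k ∈ Finset.range t, β^(t-k) * ‖p k‖^2)
    (hsum : Summable (fun t => ‖p t‖^2))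
    (hpos : 0 < ∑' t, ‖p t‖^2) :
    Filter.Tendsto (fun t => (b t - ‖θ₀‖^2) / (a t - ‖θ₀‖^2)) Filter.atTop
      (nhds (1 + 2*β/(1-β))) := by
  obtain ⟨hβ0, hβ1⟩ := hβ
  have h1β : (0:ℝ) < 1 - β := by linarith
  set u : ℕ → ℝ := fun k => ‖p k‖^2 with hu
  have hu0 : ∀ k, 0 ≤ u k := fun k => sq_nonneg _
  set S : ℝ := ∑' t, u t with hSdef
  set A : ℕ → ℝ := fun t => ∑ k ∈ Finset.range t, u k with hA
  set R : ℕ → ℝ := fun t => ∑ k ∈ Finset.range t, β^(t-k) * u k with hR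
  set C : ℕ → ℝ := fun t => ∑ s ∈ Finset.range t, R s with hC
  have hAsucc : ∀ t, A (t+1) = A t + u t := fun t => Finset.sum_range_succ _ _
  have hCsucc : ∀ t, C (t+1) = C t + R t := fun t => Finset.sum_range_succ _ _
  have hRsucc : ∀ t, R (t+1) = β * R t + β * u t := by
    intro t
    simp only [hR]
    rw [Finset.sum_range_succ]
    have hcongr : ∀ k ∈ Finset.range t, β^(t+1-k) * u k = β * (β^(t-k) * u k) := by
      intro k hk
      rw [Finset.mem_range] at hk
      have he : t+1-k = (t-k)+1 := by omega
      rw [he, pow_succ]; ring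
    rw [Finset.sum_congr rfl hcongr, ← Finset.mul_sum]
    have ht : t+1-t = 1 := by omega
    rw [ht, pow_one]
  have hRnonneg : ∀ t, 0 ≤ R t := fun t =>
    Finset.sum_nonneg fun k _ => mul_nonneg (pow_nonneg hβ0.le _) (hu0 k)
  have hAleS : ∀ t, A t ≤ S := fun t => Summable.sum_le_tsum _ (fun k _ => hu0 k) hsum
  have hCrec : ∀ t, C (t+1) = β * C t + β * A t := by
    intro t
    induction t with
    | zero => simp [hC, hA, hR]
    | succ t ih =>
      have h : C t + R t = β * C t + β * A t := by rw [← hCsucc t, ih]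
      rw [hCsucc (t+1), ih, hRsucc, hAsucc]
      linear_combination β * h
  have hCmono : Monotone C := monotone_nat_of_le_succ (fun t => by
    rw [hCsucc]; linarith [hRnonneg t])
  have hCbound : ∀ t, C t ≤ β * S / (1-β) := by
    intro t
    have h1 : C t ≤ C (t+1) := hCmono (Nat.le_succ t)
    rw [hCrec t] at h1
    rw [le_div_iff₀ h1β]
    nlinarith [hAleS t]
  obtain ⟨L, hL⟩ : ∃ L, Filter.Tendsto C Filter.atTop (nhds L) := by
    rcases tendsto_of_monotone hCmono with h | h
    · exfalso
      obtain ⟨t, ht⟩ := (h.eventually_gt_atTop (β * S / (1-β))).exists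
      exact absurd (hCbound t) (not_le.mpr ht)
    · exact h
  have hAS : Filter.Tendsto A Filter.atTop (nhds S) := hsum.hasSum.tendsto_sum_nat
  have hL1 : Filter.Tendsto (fun t => C (t+1)) Filter.atTop (nhds L) :=
    hL.comp (Filter.tendsto_add_atTop_nat 1)
  have hL2 : Filter.Tendsto (fun t => β * C t + β * A t) Filter.atTop
      (nhds (β * L + β * S)) := (hL.const_mul β).add (hAS.const_mul β)
  have hLeq : L = β * L + β * S :=
    tendsto_nhds_unique (hL1.congr fun t => hCrec t) hL2
  have hS0 : 0 < S := hpos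
  have hLval : L = β * S / (1-β) := by
    field_simp
    linarith
  have haA : ∀ t, a t = ‖θ₀‖^2 + η^2 * A t := by
    intro t
    induction t with
    | zero => simp [ha0, hA]
    | succ t ih => rw [ha t, ih, hAsucc]; ring
  have hbA : ∀ t, b t = ‖θ₀‖^2 + η^2 * A t + 2*η^2 * C t := by
    intro t
    induction t with
    | zero => simp [hb0, hA, hC]
    | succ t ih => rw [hb t, ih, hAsucc, hCsucc]; ring
  have hden : Filter.Tendsto (fun t => η^2 * A t) Filter.atTop (nhds (η^2 * S)) :=
    hAS.const_mul _
  have hnum : Filter.Tendsto (fun t => η^2 * A t + 2*η^2 * C t) Filter.atTop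
      (nhds (η^2 * S + 2*η^2 * L)) := (hAS.const_mul _).add (hL.const_mul _)
  have hne : η^2 * S ≠ 0 := by positivity
  have hdiv := hnum.div hden hne
  have hlim : (η^2 * S + 2*η^2 * L) / (η^2 * S) = 1 + 2*β/(1-β) := by
    rw [hLval]
    field_simp
  rw [← hlim]
  refine hdiv.congr fun t => ?_
  simp only [Pi.div_apply]
  rw [haA t, hbA t]
  congr 1 <;> ring
end

section
/- The minimizer of s ↦ ∑_{d=1}^D G_d/s_d subject to ∑_d s_d² ≤ c and s_d > 0, where G_d = ∑_{i=0}^t g_{id}² > 0, satisfies s_d ∝ G_d^{1/3}; explicitly s_d = √c · G_d^{1/3}/√(∑_e G_e^{2/3}). -/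
private lemma amgm3 (a b : ℝ) (ha : 0 ≤ a) (hb : 0 ≤ b) :
    3 * (a ^ 2 * b) ≤ 2 * a ^ 3 + b ^ 3 := by
  nlinarith [sq_nonneg (a - b), mul_nonneg ha hb, sq_nonneg a, sq_nonneg b,
    mul_nonneg (mul_nonneg ha ha) hb, mul_nonneg (sq_nonneg (a-b)) ha,
    mul_nonneg (sq_nonneg (a-b)) hb]

private lemma key (g s L : ℝ) (hg : 0 < g) (hs : 0 < s) (hL : 0 ≤ L) :
    3 * (g ^ ((2:ℝ)/3) * L) ≤ 2 * (g / s) + L ^ 3 * s ^ 2 := by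
  set a := (g / s) ^ ((1:ℝ)/3) with ha_def
  set b := L * s ^ ((2:ℝ)/3) with hb_def
  have hgs : (0:ℝ) < g / s := div_pos hg hs
  have ha : 0 ≤ a := Real.rpow_nonneg hgs.le _
  have hspow : (0:ℝ) < s ^ ((2:ℝ)/3) := Real.rpow_pos_of_pos hs _
  have hb : 0 ≤ b := mul_nonneg hL hspow.le
  have ha3 : a ^ 3 = g / s := by
    rw [ha_def, ← Real.rpow_natCast ((g/s) ^ ((1:ℝ)/3)) 3, ← Real.rpow_mul hgs.le]
    norm_num
  have hb3 : b ^ 3 = L ^ 3 * s ^ 2 := by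
    rw [hb_def, mul_pow, ← Real.rpow_natCast (s ^ ((2:ℝ)/3)) 3, ← Real.rpow_mul hs.le]
    norm_num [Real.rpow_natCast]
  have hab : a ^ 2 * b = g ^ ((2:ℝ)/3) * L := by
    have ha2 : a ^ 2 = g ^ ((2:ℝ)/3) / s ^ ((2:ℝ)/3) := by
      rw [ha_def, ← Real.rpow_natCast ((g/s) ^ ((1:ℝ)/3)) 2, ← Real.rpow_mul hgs.le]
      norm_num [Real.div_rpow hg.le hs.le]
    rw [ha2, hb_def]
    field_simp
  have := amgm3 a b ha hb
  rw [ha3, hb3, hab] at this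
  linarith

theorem stmt18 {D : ℕ} (hD : 0 < D) (G : Fin D → ℝ) (hG : ∀ i, 0 < G i)
    (c : ℝ) (hc : 0 < c) (sOpt : Fin D → ℝ)
    (hsOpt : ∀ i, sOpt i
      = Real.sqrt c * (G i) ^ ((1:ℝ)/3) / Real.sqrt (∑ e, (G e) ^ ((2:ℝ)/3))) :
    (∀ i, 0 < sOpt i) ∧ (∑ i, (sOpt i)^2 ≤ c) ∧
    ∀ s : Fin D → ℝ, (∀ i, 0 < s i) → (∑ i, (s i)^2 ≤ c) →
      ∑ i, G i / sOpt i ≤ ∑ i, G i / s i := by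
  set S : ℝ := ∑ e, (G e) ^ ((2:ℝ)/3) with hS_def
  have hne : (Finset.univ : Finset (Fin D)).Nonempty := by
    simpa [Finset.univ_nonempty_iff] using Fin.pos_iff_nonempty.mp hD
  have hS : 0 < S := Finset.sum_pos (fun i _ => Real.rpow_pos_of_pos (hG i) _) hne
  have hsqS : 0 < Real.sqrt S := Real.sqrt_pos.mpr hS
  have hsqc : 0 < Real.sqrt c := Real.sqrt_pos.mpr hc
  have hpos : ∀ i, 0 < sOpt i := by
    intro i
    rw [hsOpt i]
    exact div_pos (mul_pos hsqc (Real.rpow_pos_of_pos (hG i) _)) hsqS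
  have hsq : ∀ i, (sOpt i) ^ 2 = c * (G i) ^ ((2:ℝ)/3) / S := by
    intro i
    rw [hsOpt i, div_pow, mul_pow, Real.sq_sqrt hc.le, Real.sq_sqrt hS.le]
    congr 1
    congr 1
    rw [← Real.rpow_natCast ((G i) ^ ((1:ℝ)/3)) 2, ← Real.rpow_mul (hG i).le]
    norm_num
  have hsum : ∑ i, (sOpt i) ^ 2 = c := by
    simp only [hsq]
    rw [← Finset.sum_div, ← Finset.mul_sum, ← hS_def]
    field_simp
  refine ⟨hpos, le_of_eq hsum, ?_⟩
  intro s hs hsc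
  set L : ℝ := Real.sqrt S / Real.sqrt c with hL_def
  have hL : 0 < L := div_pos hsqS hsqc
  have hTopt : ∑ i, G i / sOpt i = L * S := by
    have : ∀ i, G i / sOpt i = L * (G i) ^ ((2:ℝ)/3) := by
      intro i
      have h1 : (G i) ^ ((1:ℝ)/3) ≠ 0 := (Real.rpow_pos_of_pos (hG i) _).ne'
      have h2 : G i ^ ((2:ℝ)/3) = G i / G i ^ ((1:ℝ)/3) := by
        rw [eq_div_iff h1, ← Real.rpow_add (hG i)]; norm_num
      rw [hsOpt i, hL_def, h2]
      field_simp
    simp only [this]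
    rw [← Finset.mul_sum, ← hS_def]
  rw [hTopt]
  -- summed AM-GM inequality
  have hkey : ∀ i, 3 * ((G i) ^ ((2:ℝ)/3) * L) ≤ 2 * (G i / s i) + L ^ 3 * (s i) ^ 2 :=
    fun i => key (G i) (s i) L (hG i) (hs i) hL.le
  have hsumkey : 3 * (L * S) ≤ 2 * (∑ i, G i / s i) + L ^ 3 * (∑ i, (s i) ^ 2) := by
    calc 3 * (L * S) = ∑ i, 3 * ((G i) ^ ((2:ℝ)/3) * L) := by
          rw [hS_def, Finset.mul_sum, Finset.mul_sum]
          congr 1; ext i; ring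
      _ ≤ ∑ i, (2 * (G i / s i) + L ^ 3 * (s i) ^ 2) := Finset.sum_le_sum (fun i _ => hkey i)
      _ = 2 * (∑ i, G i / s i) + L ^ 3 * (∑ i, (s i) ^ 2) := by
          rw [Finset.sum_add_distrib, Finset.mul_sum, Finset.mul_sum]
  have hLc : L ^ 3 * c = L * S := by
    rw [hL_def]
    have h1 : Real.sqrt S ^ 3 = S * Real.sqrt S := by
      rw [pow_succ, Real.sq_sqrt hS.le]
    have h2 : Real.sqrt c ^ 3 = c * Real.sqrt c := by
      rw [pow_succ, Real.sq_sqrt hc.le]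
    rw [div_pow, h1, h2]
    field_simp
  have hfin : L ^ 3 * (∑ i, (s i) ^ 2) ≤ L * S := by
    rw [← hLc]
    exact mul_le_mul_of_nonneg_left hsc (by positivity)
  linarith
end
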